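/- For α ∈ (0, 1/2), the ratio ((1 − 2α)·ln((1−α)/α)) / (2(Φ^{−1}(1−α))²), where Φ^{−1} is the standard normal quantile function, is well defined and strictly positive; at α ≈ 0.235 (the value satisfying the minimax fixed point of the Wald problem) this ratio is approximately 0.6. -/

import Mathlib

open MeasureTheory ProbabilityTheory Set

/-- The standard normal CDF `Φ`. -/
noncomputable def stdNormalCDF (x : ℝ) : ℝ :=
  ((gaussianReal 0 1) (Set.Iic x)).toReal

/-- The standard normal quantile function `Φ⁻¹` (a two-sided inverse of `Φ` on `(0,1)`). -/
noncomputable def stdNormalQuantile : ℝ → ℝ :=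
  Function.invFun stdNormalCDF

/-- The ratio `E[τ*]/T_{R*}` as a function of the misidentification probability `α`. -/
noncomputable def adaptiveGainRatio (α : ℝ) : ℝ :=
  (1 - 2 * α) * Real.log ((1 - α) / α) / (2 * (stdNormalQuantile (1 - α)) ^ 2)

namespace AdaptiveGainAux

open Real

lemma pdf_eq (x : ℝ) : gaussianPDFReal 0 1 x = (Real.sqrt (2*Real.pi))⁻¹ * Real.exp (-x^2/2) := by
  simp [gaussianPDFReal]

lemma pdf_cont : Continuous (gaussianPDFReal 0 1) := by
  rw [gaussianPDFReal_def]; fun_prop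

lemma cdf_eq (x : ℝ) : stdNormalCDF x = ∫ t in Iic x, gaussianPDFReal 0 1 t := by
  rw [stdNormalCDF, gaussianReal_apply_eq_integral 0 one_ne_zero,
    ENNReal.toReal_ofReal (setIntegral_nonneg measurableSet_Iic fun t _ => gaussianPDFReal_nonneg 0 1 t)]

lemma cdf_sub (a b : ℝ) : stdNormalCDF b - stdNormalCDF a = ∫ t in a..b, gaussianPDFReal 0 1 t := by
  rw [cdf_eq, cdf_eq]
  exact intervalIntegral.integral_Iic_sub_Iic ((integrable_gaussianPDFReal 0 1).integrableOn)
    ((integrable_gaussianPDFReal 0 1).integrableOn)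

lemma cdf_zero : stdNormalCDF 0 = 1/2 := by
  have h1 := integral_gaussianPDFReal_eq_one 0 (one_ne_zero)
  have hsplit := intervalIntegral.integral_Iic_add_Ioi (μ := volume) (b := (0:ℝ))
    ((integrable_gaussianPDFReal 0 1).integrableOn) ((integrable_gaussianPDFReal 0 1).integrableOn)
  have heven : (fun x : ℝ => gaussianPDFReal 0 1 (-x)) = gaussianPDFReal 0 1 := by
    funext x; rw [pdf_eq, pdf_eq, neg_sq]
  have h2 : ∫ t in Ioi (0:ℝ), gaussianPDFReal 0 1 t = ∫ t in Iic (0:ℝ), gaussianPDFReal 0 1 t := by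
    rw [← heven, integral_comp_neg_Ioi, neg_zero, heven]
  rw [cdf_eq]
  linarith [hsplit, h1, h2]

lemma cdf_strictMono : StrictMono stdNormalCDF := by
  intro a b hab
  have h := cdf_sub a b
  have hpos : 0 < ∫ t in a..b, gaussianPDFReal 0 1 t :=
    intervalIntegral.intervalIntegral_pos_of_pos_on (pdf_cont.intervalIntegrable a b)
      (fun x _ => gaussianPDFReal_pos 0 1 x one_ne_zero) hab
  linarith

lemma cdf_cont : Continuous stdNormalCDF := by
  have h : stdNormalCDF = fun x => stdNormalCDF 0 + ∫ t in (0:ℝ)..x, gaussianPDFReal 0 1 t := by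
    funext x; have := cdf_sub 0 x; linarith
  rw [h]
  exact continuous_const.add ((integrable_gaussianPDFReal 0 1).continuous_primitive 0)

lemma cdf_tendsto : Filter.Tendsto stdNormalCDF Filter.atTop (nhds 1) := by
  have h := MeasureTheory.tendsto_measure_Iic_atTop (gaussianReal 0 1)
  rw [measure_univ] at h
  have h2 := (ENNReal.tendsto_toReal ENNReal.one_ne_top).comp h
  exact h2

lemma quantile_spec {p : ℝ} (hp : 1/2 < p) (hp1 : p < 1) :
    stdNormalCDF (stdNormalQuantile p) = p := by
  obtain ⟨B, hB1, hB0⟩ :=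
    ((cdf_tendsto.eventually (eventually_gt_nhds hp1)).and (Filter.eventually_ge_atTop (0:ℝ))).exists
  have hmem : p ∈ Icc (stdNormalCDF 0) (stdNormalCDF B) := ⟨by rw [cdf_zero]; linarith, hB1.le⟩
  obtain ⟨x, -, hx⟩ := intermediate_value_Icc hB0 cdf_cont.continuousOn hmem
  exact Function.invFun_eq ⟨x, hx⟩

lemma quantile_pos {p : ℝ} (hp : 1/2 < p) (hp1 : p < 1) : 0 < stdNormalQuantile p := by
  by_contra h
  push_neg at h
  have h2 := cdf_strictMono.monotone h
  rw [quantile_spec hp hp1, cdf_zero] at h2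
  linarith

lemma quantile_bracket {p a b : ℝ} (hp : 1/2 < p) (hp1 : p < 1)
    (ha : stdNormalCDF a ≤ p) (hb : p ≤ stdNormalCDF b) :
    a ≤ stdNormalQuantile p ∧ stdNormalQuantile p ≤ b := by
  have hq := quantile_spec hp hp1
  constructor
  · by_contra h; push_neg at h
    have h2 := cdf_strictMono h
    rw [hq] at h2; linarith
  · by_contra h; push_neg at h
    have h2 := cdf_strictMono h
    rw [hq] at h2; linarith

lemma sqrt_twopi_lb : 2.506627 < Real.sqrt (2*π) := by
  rw [show (2.506627:ℝ) = Real.sqrt (2.506627^2) from (Real.sqrt_sq (by norm_num)).symm]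
  apply Real.sqrt_lt_sqrt (by positivity)
  nlinarith [Real.pi_gt_d6]

lemma sqrt_twopi_ub : Real.sqrt (2*π) < 2.506629 := by
  rw [show (2.506629:ℝ) = Real.sqrt (2.506629^2) from (Real.sqrt_sq (by norm_num)).symm]
  apply Real.sqrt_lt_sqrt (by positivity)
  nlinarith [Real.pi_lt_d6]

lemma c_lb : (0.398942:ℝ) < (Real.sqrt (2*π))⁻¹ := by
  have h := sqrt_twopi_ub
  have h0 : (0:ℝ) < Real.sqrt (2*π) := lt_trans (by norm_num) sqrt_twopi_lb
  rw [lt_inv_comm₀ (by norm_num) h0]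
  calc Real.sqrt (2*π) < 2.506629 := h
    _ < (0.398942:ℝ)⁻¹ := by norm_num

lemma c_ub : (Real.sqrt (2*π))⁻¹ < 0.398943 := by
  have h0 : (0:ℝ) < Real.sqrt (2*π) := lt_trans (by norm_num) sqrt_twopi_lb
  rw [inv_lt_comm₀ h0 (by norm_num)]
  calc (0.398943:ℝ)⁻¹ < 2.506627 := by norm_num
    _ < Real.sqrt (2*π) := sqrt_twopi_lb

lemma exp_neg_bounds {u : ℝ} (h0 : 0 ≤ u) (h1 : u ≤ 1) :
    1 - u + u^2/2 - u^3/6 - 5*u^4/96 ≤ Real.exp (-u) ∧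
    Real.exp (-u) ≤ 1 - u + u^2/2 - u^3/6 + 5*u^4/96 := by
  have h := Real.exp_bound (x := -u) (by rwa [abs_neg, abs_of_nonneg h0]) (by norm_num : 0 < 4)
  rw [abs_neg, abs_of_nonneg h0] at h
  norm_num [Finset.sum_range_succ, Nat.factorial] at h
  obtain ⟨h2, h3⟩ := abs_le.mp h
  constructor <;> nlinarith [h2, h3]

lemma poly_antideriv (c9 : ℝ) (x : ℝ) :
    ∫ t in (0:ℝ)..x, (1 - t^2/2 + t^4/8 - t^6/48 + c9*(5*t^8/1536)) =
      x - x^3/6 + x^5/40 - x^7/336 + c9*(5*x^9/13824) := by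
  have hder : ∀ t : ℝ, HasDerivAt (fun t : ℝ => t - t^3/6 + t^5/40 - t^7/336 + c9*(5*t^9/13824))
      (1 - t^2/2 + t^4/8 - t^6/48 + c9*(5*t^8/1536)) t := by
    intro t
    have h := ((((hasDerivAt_id t).sub ((hasDerivAt_pow 3 t).div_const 6)).add
      ((hasDerivAt_pow 5 t).div_const 40)).sub ((hasDerivAt_pow 7 t).div_const 336)).add
      ((((hasDerivAt_pow 9 t).const_mul (5:ℝ)).div_const 13824).const_mul c9)
    refine h.congr_deriv ?_
    push_cast; ring
  rw [intervalIntegral.integral_eq_sub_of_hasDerivAt (fun t _ => hder t)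
    ((by fun_prop : Continuous fun t : ℝ => 1 - t^2/2 + t^4/8 - t^6/48 + c9*(5*t^8/1536)).intervalIntegrable (μ := volume) 0 x)]
  ring

lemma J_bounds {x : ℝ} (h0 : 0 ≤ x) (h1 : x ≤ 1) :
    x - x^3/6 + x^5/40 - x^7/336 - 5*x^9/13824 ≤ (∫ t in (0:ℝ)..x, Real.exp (-t^2/2)) ∧
    (∫ t in (0:ℝ)..x, Real.exp (-t^2/2)) ≤ x - x^3/6 + x^5/40 - x^7/336 + 5*x^9/13824 := by
  have hexp : Continuous fun t : ℝ => Real.exp (-t^2/2) := by fun_prop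
  have key : ∀ t, t ∈ Icc (0:ℝ) x →
      (1 - t^2/2 + t^4/8 - t^6/48 + (-1)*(5*t^8/1536) ≤ Real.exp (-t^2/2) ∧
       Real.exp (-t^2/2) ≤ 1 - t^2/2 + t^4/8 - t^6/48 + 1*(5*t^8/1536)) := by
    intro t ht
    have h0t : (0:ℝ) ≤ t^2/2 := by positivity
    have h1t : t^2/2 ≤ 1 := by nlinarith [ht.1, ht.2]
    obtain ⟨hl, hu⟩ := exp_neg_bounds h0t h1t
    rw [show -t^2/2 = -(t^2/2) by ring]
    constructor <;> nlinarith [hl, hu]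
  constructor
  · have := intervalIntegral.integral_mono_on h0
      ((by fun_prop : Continuous fun t : ℝ => 1 - t^2/2 + t^4/8 - t^6/48 + (-1)*(5*t^8/1536)).intervalIntegrable (μ := volume) 0 x)
      (hexp.intervalIntegrable (μ := volume) 0 x) (fun t ht => (key t ht).1)
    rw [poly_antideriv (-1) x] at this
    linarith
  · have := intervalIntegral.integral_mono_on h0 (hexp.intervalIntegrable (μ := volume) 0 x)
      ((by fun_prop : Continuous fun t : ℝ => 1 - t^2/2 + t^4/8 - t^6/48 + 1*(5*t^8/1536)).intervalIntegrable (μ := volume) 0 x)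
      (fun t ht => (key t ht).2)
    rw [poly_antideriv 1 x] at this
    linarith

lemma cdf_eq_half_add (x : ℝ) :
    stdNormalCDF x = 1/2 + (Real.sqrt (2*π))⁻¹ * ∫ t in (0:ℝ)..x, Real.exp (-t^2/2) := by
  have h := cdf_sub 0 x
  rw [cdf_zero] at h
  have h2 : (∫ t in (0:ℝ)..x, gaussianPDFReal 0 1 t)
      = (Real.sqrt (2*π))⁻¹ * ∫ t in (0:ℝ)..x, Real.exp (-t^2/2) := by
    rw [← intervalIntegral.integral_const_mul]
    exact intervalIntegral.integral_congr fun t _ => pdf_eq t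
  linarith [h, h2.symm.le, h2.le]

lemma Phi_le {x : ℝ} (h0 : 0 ≤ x) (h1 : x ≤ 1) :
    stdNormalCDF x ≤ 1/2 + 0.398943 * (x - x^3/6 + x^5/40 - x^7/336 + 5*x^9/13824) := by
  rw [cdf_eq_half_add]
  have hJ0 : 0 ≤ ∫ t in (0:ℝ)..x, Real.exp (-t^2/2) :=
    intervalIntegral.integral_nonneg h0 (fun t _ => (Real.exp_pos _).le)
  have := mul_le_mul c_ub.le (J_bounds h0 h1).2 hJ0 (by norm_num)
  linarith

lemma Phi_ge {x : ℝ} (h0 : 0 ≤ x) (h1 : x ≤ 1)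
    (hI : 0 ≤ x - x^3/6 + x^5/40 - x^7/336 - 5*x^9/13824) :
    1/2 + 0.398942 * (x - x^3/6 + x^5/40 - x^7/336 - 5*x^9/13824) ≤ stdNormalCDF x := by
  rw [cdf_eq_half_add]
  have hc0 : (0:ℝ) ≤ (Real.sqrt (2*π))⁻¹ := by positivity
  have := mul_le_mul c_lb.le (J_bounds h0 h1).1 hI hc0
  linarith

lemma log_add_one_bounds {y : ℝ} (h0 : 0 ≤ y) :
    y - y^2/2 + y^3/3 - y^4/4 ≤ Real.log (1+y) ∧
    Real.log (1+y) ≤ y - y^2/2 + y^3/3 - y^4/4 + y^5/5 := by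
  have hlog : ∀ t ∈ uIcc (0:ℝ) y, HasDerivAt (fun t : ℝ => Real.log (1+t)) (1+t)⁻¹ t := by
    intro t ht
    rw [uIcc_of_le h0] at ht
    have h1t : (0:ℝ) < 1 + t := by have := ht.1; linarith
    simpa using ((hasDerivAt_id t).const_add (1:ℝ)).log (ne_of_gt h1t)
  have hcont : ContinuousOn (fun t : ℝ => (1+t)⁻¹) (uIcc 0 y) := by
    apply ContinuousOn.inv₀ (by fun_prop)
    intro t ht
    rw [uIcc_of_le h0] at ht
    have := ht.1; intro hzero; linarith
  have hint : IntervalIntegrable (fun t : ℝ => (1+t)⁻¹) volume 0 y :=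
    hcont.intervalIntegrable
  have hval : (∫ t in (0:ℝ)..y, (1+t)⁻¹) = Real.log (1+y) := by
    rw [intervalIntegral.integral_eq_sub_of_hasDerivAt hlog hint]
    simp
  have hptl : ∀ t ∈ Icc (0:ℝ) y, 1 - t + t^2 - t^3 ≤ (1+t)⁻¹ := by
    intro t ht
    have h1t : (0:ℝ) < 1 + t := by have := ht.1; linarith
    rw [inv_eq_one_div, le_div_iff₀ h1t]
    nlinarith [pow_nonneg ht.1 4]
  have hptu : ∀ t ∈ Icc (0:ℝ) y, (1+t)⁻¹ ≤ 1 - t + t^2 - t^3 + t^4 := by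
    intro t ht
    have h1t : (0:ℝ) < 1 + t := by have := ht.1; linarith
    rw [inv_eq_one_div, div_le_iff₀ h1t]
    nlinarith [pow_nonneg ht.1 5]
  have hanti : ∀ c4 : ℝ, (∫ t in (0:ℝ)..y, (1 - t + t^2 - t^3 + c4*t^4)) =
      y - y^2/2 + y^3/3 - y^4/4 + c4*(y^5/5) := by
    intro c4
    have hder : ∀ t : ℝ, HasDerivAt (fun t : ℝ => t - t^2/2 + t^3/3 - t^4/4 + c4*(t^5/5))
        (1 - t + t^2 - t^3 + c4*t^4) t := by
      intro t
      have h := ((((hasDerivAt_id t).sub ((hasDerivAt_pow 2 t).div_const 2)).add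
        ((hasDerivAt_pow 3 t).div_const 3)).sub ((hasDerivAt_pow 4 t).div_const 4)).add
        (((hasDerivAt_pow 5 t).div_const 5).const_mul c4)
      refine h.congr_deriv ?_
      push_cast; ring
    rw [intervalIntegral.integral_eq_sub_of_hasDerivAt (fun t _ => hder t)
      ((by fun_prop : Continuous fun t : ℝ => 1 - t + t^2 - t^3 + c4*t^4).intervalIntegrable (μ := volume) 0 y)]
    ring
  constructor
  · have h := intervalIntegral.integral_mono_on h0
      ((by fun_prop : Continuous fun t : ℝ => 1 - t + t^2 - t^3 + (0:ℝ)*t^4).intervalIntegrable (μ := volume) 0 y)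
      hint (fun t ht => by simpa using hptl t ht)
    rw [hanti 0, hval] at h
    linarith
  · have h := intervalIntegral.integral_mono_on h0 hint
      ((by fun_prop : Continuous fun t : ℝ => 1 - t + t^2 - t^3 + (1:ℝ)*t^4).intervalIntegrable (μ := volume) 0 y)
      (fun t ht => by simpa using hptu t ht)
    rw [hanti 1, hval] at h
    linarith

lemma log_sq_decomp {s : ℝ} (hs : 0 < s) : Real.log (4*s^2) = 2*Real.log 2 + 2*Real.log s := by
  rw [show (4:ℝ)*s^2 = (2*s)^2 by ring, Real.log_pow, Real.log_mul (by norm_num) (ne_of_gt hs)]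
  push_cast; ring

lemma log_s_bounds {s : ℝ} (hs : 1/2 ≤ s) (hs1 : s ≤ 1) :
    -((1/s-1) - (1/s-1)^2/2 + (1/s-1)^3/3 - (1/s-1)^4/4 + (1/s-1)^5/5) ≤ Real.log s ∧
    Real.log s ≤ -((1/s-1) - (1/s-1)^2/2 + (1/s-1)^3/3 - (1/s-1)^4/4) := by
  have hs0 : (0:ℝ) < s := by linarith
  have hy0 : 0 ≤ 1/s - 1 := by
    rw [le_sub_iff_add_le, zero_add, le_div_iff₀ hs0]; linarith
  have h1y : 1 + (1/s - 1) = 1/s := by ring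
  have hlog : Real.log (1 + (1/s-1)) = -Real.log s := by
    rw [h1y, one_div, Real.log_inv]
  obtain ⟨hl, hu⟩ := log_add_one_bounds hy0
  rw [hlog] at hl hu
  constructor <;> linarith

lemma log_upper_num {r s B : ℝ} (hr : 0 < r) (hs : 1/2 ≤ s) (hs1 : s ≤ 1) (h4 : r ≤ 4*s^2)
    (hB : 2*(0.6931471808:ℝ) - 2*((1/s-1) - (1/s-1)^2/2 + (1/s-1)^3/3 - (1/s-1)^4/4) ≤ B) :
    Real.log r ≤ B := by
  have h1 : Real.log r ≤ Real.log (4*s^2) := Real.log_le_log hr h4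
  rw [log_sq_decomp (by linarith)] at h1
  have h2 := (log_s_bounds hs hs1).2
  have h3 := Real.log_two_lt_d9
  linarith

lemma log_lower_num {r s B : ℝ} (hs : 1/2 ≤ s) (hs1 : s ≤ 1) (h4 : 4*s^2 ≤ r)
    (hB : B ≤ 2*(0.6931471803:ℝ) -
      2*((1/s-1) - (1/s-1)^2/2 + (1/s-1)^3/3 - (1/s-1)^4/4 + (1/s-1)^5/5)) :
    B ≤ Real.log r := by
  have hs0 : (0:ℝ) < s := by linarith
  have h1 : Real.log (4*s^2) ≤ Real.log r := Real.log_le_log (by positivity) h4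
  rw [log_sq_decomp hs0] at h1
  have h2 := (log_s_bounds hs hs1).1
  have h3 := Real.log_two_gt_d9
  linarith

set_option maxHeartbeats 2000000 in
lemma ratio_interval {α a b s1 s2 Lu Ll cl cu : ℝ}
    (hα1 : cl/2 ≤ α) (hα2 : α ≤ cu/2)
    (hcu : cu ≤ 0.6) (hcl : 0.4 < cl)
    (ha0 : 0.5 ≤ a) (ha1 : a ≤ 1) (hb0 : 0.5 ≤ b) (hb1 : b ≤ 1)
    (hΦa : 1/2 + 0.398943 * (a - a^3/6 + a^5/40 - a^7/336 + 5*a^9/13824) ≤ 1 - cu/2)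
    (hIb : 0 ≤ b - b^3/6 + b^5/40 - b^7/336 - 5*b^9/13824)
    (hΦb : 1 - cl/2 ≤ 1/2 + 0.398942 * (b - b^3/6 + b^5/40 - b^7/336 - 5*b^9/13824))
    (hs1a : 1/2 ≤ s1) (hs1b : s1 ≤ 1) (hs2a : 1/2 ≤ s2) (hs2b : s2 ≤ 1)
    (h4s1 : 4*s1^2 ≤ (1-cu/2)/(cu/2)) (h4s2 : (1-cl/2)/(cl/2) ≤ 4*s2^2)
    (hLu : 2*(0.6931471808:ℝ) - 2*((1/s2-1) - (1/s2-1)^2/2 + (1/s2-1)^3/3 - (1/s2-1)^4/4) ≤ Lu)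
    (hLl : Ll ≤ 2*(0.6931471803:ℝ) -
      2*((1/s1-1) - (1/s1-1)^2/2 + (1/s1-1)^3/3 - (1/s1-1)^4/4 + (1/s1-1)^5/5))
    (hLl0 : 0 ≤ Ll)
    (hup : (1-cl)*Lu < 0.61*(2*a^2)) (hlo : 0.59*(2*b^2) < (1-cu)*Ll) :
    |adaptiveGainRatio α - 0.6| < 0.01 := by
  have hα0 : 0 < α := by linarith
  have hαh : α < 1/2 := by linarith
  have hp : 1/2 < 1 - α := by linarith
  have hp1 : 1 - α < 1 := by linarith
  -- CDF bracket
  have hΦa' : stdNormalCDF a ≤ 1 - α := by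
    have h := Phi_le (le_trans (by norm_num) ha0) ha1
    linarith
  have hΦb' : 1 - α ≤ stdNormalCDF b := by
    have h := Phi_ge (le_trans (by norm_num) hb0) hb1 hIb
    linarith
  obtain ⟨hqa, hqb⟩ := quantile_bracket hp hp1 hΦa' hΦb'
  set q := stdNormalQuantile (1 - α) with hqdef
  have hq0 : (0:ℝ) < q := lt_of_lt_of_le (by linarith) hqa
  have hq2a : a^2 ≤ q^2 := by nlinarith
  have hq2b : q^2 ≤ b^2 := by nlinarith
  -- log bounds
  have hr0 : (0:ℝ) < (1-α)/α := by positivity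
  have hru : (1-α)/α ≤ (1-cl/2)/(cl/2) := by
    rw [div_le_div_iff₀ hα0 (by linarith)]
    nlinarith
  have hrl : (1-cu/2)/(cu/2) ≤ (1-α)/α := by
    rw [div_le_div_iff₀ (by linarith) hα0]
    nlinarith
  have hlogu : Real.log ((1-α)/α) ≤ Lu := by
    have := log_upper_num (r := (1-cl/2)/(cl/2)) (div_pos (by linarith) (by linarith)) hs2a hs2b h4s2 hLu
    exact le_trans (Real.log_le_log hr0 hru) this
  have hlogl : Ll ≤ Real.log ((1-α)/α) := by
    have := log_lower_num (r := (1-cu/2)/(cu/2)) hs1a hs1b h4s1 hLl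
    exact le_trans this (Real.log_le_log (div_pos (by linarith) (by linarith)) hrl)
  have hlog0 : 0 ≤ Real.log ((1-α)/α) := le_trans hLl0 hlogl
  -- numerator bounds
  have hNu : (1 - 2*α) * Real.log ((1-α)/α) ≤ (1-cl)*Lu := by
    apply mul_le_mul (by linarith) hlogu hlog0 (by linarith)
  have hNl : (1-cu)*Ll ≤ (1 - 2*α) * Real.log ((1-α)/α) := by
    apply mul_le_mul (by linarith) hlogl hLl0 (by linarith)
  have hD : (0:ℝ) < 2*q^2 := by positivity
  have key : adaptiveGainRatio α = (1 - 2*α) * Real.log ((1-α)/α) / (2*q^2) := by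
    rw [adaptiveGainRatio, hqdef]
  have h1 : (0.59:ℝ) < (1 - 2*α) * Real.log ((1-α)/α) / (2*q^2) := by
    rw [lt_div_iff₀ hD]; nlinarith
  have h2 : (1 - 2*α) * Real.log ((1-α)/α) / (2*q^2) < 0.61 := by
    rw [div_lt_iff₀ hD]; nlinarith
  rw [key, abs_lt]
  constructor <;> linarith

end AdaptiveGainAux

set_option maxHeartbeats 2000000 in
open AdaptiveGainAux in
/-- for `α ∈ (0, 1/2)` the ratio
`((1-2α) ln((1-α)/α)) / (2 (Φ⁻¹(1-α))²)` is well defined (nonvanishing denominator) and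
strictly positive; for `α` near `0.235` (the minimax fixed point) the ratio is
approximately `0.6`. -/
theorem adaptive_gain_ratio_pos_and_approx :
    (∀ α ∈ Ioo (0 : ℝ) (1 / 2),
      stdNormalQuantile (1 - α) ≠ 0 ∧ 0 < adaptiveGainRatio α) ∧
    (∀ α ∈ Ioo (0 : ℝ) (1 / 2),
      |α - 0.235| < 0.001 → |adaptiveGainRatio α - 0.6| < 0.01) := by
  constructor
  · rintro α ⟨hα0, hα2⟩
    have hp : 1/2 < 1 - α := by linarith
    have hp1 : 1 - α < 1 := by linarith
    have hqpos := quantile_pos hp hp1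
    refine ⟨ne_of_gt hqpos, ?_⟩
    rw [adaptiveGainRatio]
    apply div_pos
    · apply mul_pos (by linarith)
      apply Real.log_pos
      rw [lt_div_iff₀ hα0]
      linarith
    · exact mul_pos (by norm_num) (pow_pos hqpos 2)
  · rintro α ⟨hα0, hα2⟩ habs
    rw [abs_lt] at habs
    obtain ⟨hl, hr⟩ := habs
    rcases le_or_gt α 0.235 with hc | hc
    · exact ratio_interval (α := α) (a := 0.7223) (b := 0.7259)
        (s1 := 0.902123) (s2 := 0.904643) (Lu := 1.18587) (Ll := 1.180285)
        (cl := 0.468) (cu := 0.47)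
        (by linarith) (by linarith) (by norm_num) (by norm_num)
        (by norm_num) (by norm_num) (by norm_num) (by norm_num)
        (by norm_num) (by norm_num) (by norm_num)
        (by norm_num) (by norm_num) (by norm_num) (by norm_num)
        (by norm_num) (by norm_num) (by norm_num) (by norm_num) (by norm_num)
        (by norm_num) (by norm_num)
    · exact ratio_interval (α := α) (a := 0.7191) (b := 0.7226)
        (s1 := 0.899621) (s2 := 0.902127) (Lu := 1.1803) (Ll := 1.17473)
        (cl := 0.47) (cu := 0.472)
        (by linarith) (by linarith) (by norm_num) (by norm_num)
        (by norm_num) (by norm_num) (by norm_num) (by norm_num)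
        (by norm_num) (by norm_num) (by norm_num)
        (by norm_num) (by norm_num) (by norm_num) (by norm_num)
        (by norm_num) (by norm_num) (by norm_num) (by norm_num) (by norm_num)
        (by norm_num) (by norm_num)
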